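/- In the BV algebra A = Λ_ℤ(α) ⊗ ℤ[h] of the loop homology of an odd-dimensional sphere, the bracket satisfies: {α h^{a}, α h^{b}} = (a − b) α h^{a+b−1} for all integers a, b ≥ 0 (with the convention α h^{−1} = 0, so the right side when a + b = 0 is 0), {α h^{a}, h^{m}} = −m h^{a+m−1} for all a ≥ 0, m ≥ 0, and {h^{k}, h^{m}} = 0 for all k, m ≥ 0. In particular the elements L(k) := α h^{k+1} (k ≥ −1) satisfy the Witt relations {L(k), L(ℓ)} = (k − ℓ) L(k+ℓ). -/

import Mathlib

open Polynomial

/-- The model of `A = Λ_ℤ(α) ⊗ ℤ[h]`: `(p, q)` represents `p + α·q`. -/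
abbrev A13 := Polynomial ℤ × Polynomial ℤ

/-- The graded-commutative product: `(p + αq)(p' + αq') = pp' + α(pq' + qp')`. -/
noncomputable def mul13 (a b : A13) : A13 :=
  (a.1 * b.1, a.1 * b.2 + a.2 * b.1)

/-- The BV operator: `Δ(h^ℓ) = 0`, `Δ(α h^ℓ) = ℓ h^{ℓ−1}`. -/
noncomputable def del13 (a : A13) : A13 :=
  (Polynomial.derivative a.2, 0)

/-- The bracket `{a,b} = (−1)^{|a|}(Δ(a·b) − Δ(a)·b) − a·Δ(b)` on basis elements,
extended ℤ-bilinearly via the decomposition into even part `(a.1, 0)` and odd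
part `(0, a.2)`. -/
noncomputable def bk13 (a b : A13) : A13 :=
  ((del13 (mul13 (a.1, 0) b) - mul13 (del13 (a.1, 0)) b) - mul13 (a.1, 0) (del13 b))
    + (-(del13 (mul13 (0, a.2) b) - mul13 (del13 (0, a.2)) b) - mul13 (0, a.2) (del13 b))

lemma hA13 (a b : ℕ) :
    (a : Polynomial ℤ) * X ^ (a - 1) * X ^ b = (a : Polynomial ℤ) * X ^ (a + b - 1) := by
  cases a with
  | zero => simp
  | succ n => rw [mul_assoc, ← pow_add]; congr 2; omega

lemma hB13 (a b : ℕ) :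
    (X : Polynomial ℤ) ^ a * ((b : Polynomial ℤ) * X ^ (b - 1))
      = (b : Polynomial ℤ) * X ^ (a + b - 1) := by
  cases b with
  | zero => simp
  | succ n => rw [mul_left_comm, ← pow_add, Nat.succ_sub_one, Nat.add_succ_sub_one]

theorem stmt13 :
    (∀ a b : ℕ, bk13 (0, Polynomial.X ^ a) (0, Polynomial.X ^ b)
        = ((a : ℤ) - (b : ℤ)) • ((0 : Polynomial ℤ), (Polynomial.X : Polynomial ℤ) ^ (a + b - 1)))
    ∧ (∀ a m : ℕ, bk13 (0, Polynomial.X ^ a) (Polynomial.X ^ m, 0)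
        = (-(m : ℤ)) • ((Polynomial.X : Polynomial ℤ) ^ (a + m - 1), (0 : Polynomial ℤ)))
    ∧ (∀ k m : ℕ, bk13 (Polynomial.X ^ k, 0) (Polynomial.X ^ m, 0) = 0)
    ∧ (∀ k l : ℤ, -1 ≤ k → -1 ≤ l →
        bk13 (0, Polynomial.X ^ (k + 1).toNat) (0, Polynomial.X ^ (l + 1).toNat)
          = (k - l) • ((0 : Polynomial ℤ), (Polynomial.X : Polynomial ℤ) ^ (k + l + 1).toNat)) := by
  have h1 : ∀ a b : ℕ, bk13 (0, Polynomial.X ^ a) (0, Polynomial.X ^ b)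
      = ((a : ℤ) - (b : ℤ)) • ((0 : Polynomial ℤ), (Polynomial.X : Polynomial ℤ) ^ (a + b - 1)) := by
    intro a b
    simp [bk13, mul13, del13, Prod.ext_iff, hA13, hB13, derivative_X_pow, sub_smul]
  refine ⟨h1, ?_, ?_, ?_⟩
  · intro a m
    simp [bk13, mul13, del13, Prod.ext_iff, hA13, hB13, derivative_X_pow]
  · intro k m
    simp [bk13, mul13, del13, Prod.ext_iff]
  · intro k l hk hl
    have e1 : ((k + 1).toNat : ℤ) - ((l + 1).toNat : ℤ) = k - l := by omega
    have e2 : (k + 1).toNat + (l + 1).toNat - 1 = (k + l + 1).toNat := by omega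
    rw [h1, e1, e2]
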